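/- arXiv:1905.03178 — 3 statements merged into one kernel-verified Lean document; each statement's English description precedes it below -/
import Mathlib

section
/- The inverse of Harish-Chandra's c-function for the complex unit ball, c(λ)^{-1} = 2^{iλ-n} Γ((n+iλ)/2)² / (Γ(n)Γ(iλ)), satisfies |c(λ)|^{-1} ≤ C₁ + C₂|λ|^{n-1/2} for all λ with Re(iλ) ≥ 0, for suitable constants C₁, C₂ > 0. -/
open Complex

noncomputable section

open Finset Filter Nat

private lemma telescope_fact (u y : ℝ) (hu : 0 ≤ u) (hy : y^2 ≤ u^2) :
    (u^2+y^2)*((u+1)^2+y^2) ≤ ((u+1/2)^2+y^2)^2 := by nlinarith [sq_nonneg u, sq_nonneg y]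

private lemma key_prod (x y : ℝ) (hx : 0 ≤ x) (N : ℕ) (hN : 1 ≤ N) :
    (N:ℝ) * ∏ j ∈ Finset.range (N+1), ((x+j)^2+y^2)
      ≤ 3*(1+Real.sqrt (x^2+y^2)) * ∏ j ∈ Finset.range (N+1), ((x+j+1/2)^2+y^2) := by
  set s := Real.sqrt (x^2+y^2) with hs
  have hs0 : 0 ≤ s := Real.sqrt_nonneg _
  have hys : |y| ≤ s := by
    rw [← Real.sqrt_sq_eq_abs]
    exact Real.sqrt_le_sqrt (by nlinarith [sq_nonneg x])
  have hxs : x ≤ s := by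
    have : x ≤ |x| := le_abs_self x
    rw [← Real.sqrt_sq_eq_abs] at this
    exact this.trans (Real.sqrt_le_sqrt (by nlinarith [sq_nonneg y]))
  have hab : ∀ j : ℕ, ((x+(j:ℝ))^2+y^2) ≤ ((x+(j:ℝ)+1/2)^2+y^2) := by
    intro j
    have : (0:ℝ) ≤ j := j.cast_nonneg
    nlinarith
  set K := ⌈|y|⌉₊ with hK
  have hKy : |y| ≤ (K:ℝ) := Nat.le_ceil _
  have hKy1 : (K:ℝ) < |y| + 1 := Nat.ceil_lt_add_one (_root_.abs_nonneg y)
  rcases lt_or_ge N K with hNK | hNK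
  · have hN3 : (N:ℝ) ≤ 3*(1+s) := by
      have : (N:ℝ) < K := by exact_mod_cast hNK
      nlinarith
    refine mul_le_mul hN3 (Finset.prod_le_prod (fun j _ => by positivity) (fun j _ => hab j))
      (Finset.prod_nonneg (fun j _ => by positivity)) (by positivity)
  · -- K ≤ N : telescoping case
    set a : ℕ → ℝ := fun j => (x+(j:ℝ))^2+y^2 with ha
    set b : ℕ → ℝ := fun j => (x+(j:ℝ)+1/2)^2+y^2 with hb
    have ha0 : ∀ j, 0 ≤ a j := fun j => by simp only [ha]; positivity
    have hb0 : ∀ j, 0 ≤ b j := fun j => by simp only [hb]; positivity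
    set P1a := ∏ j ∈ Finset.Ico 0 K, a j with hP1a
    set P2a := ∏ j ∈ Finset.Ico K (N+1), a j with hP2a
    set P1b := ∏ j ∈ Finset.Ico 0 K, b j with hP1b
    set P2b := ∏ j ∈ Finset.Ico K (N+1), b j with hP2b
    have hsplita : ∏ j ∈ Finset.range (N+1), a j = P1a * P2a := by
      rw [Finset.range_eq_Ico, hP1a, hP2a, Finset.prod_Ico_consecutive _ (Nat.zero_le K) (by omega)]
    have hsplitb : ∏ j ∈ Finset.range (N+1), b j = P1b * P2b := by
      rw [Finset.range_eq_Ico, hP1b, hP2b, Finset.prod_Ico_consecutive _ (Nat.zero_le K) (by omega)]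
    have htel : P2a^2 * a (N+1) = a K * ∏ j ∈ Finset.Ico K (N+1), (a j * a (j+1)) := by
      rw [Finset.prod_mul_distrib]
      have hshift : ∏ j ∈ Finset.Ico K (N+1), a (j+1) = ∏ j ∈ Finset.Ico (K+1) (N+1+1), a j := by
        rw [← Finset.prod_Ico_add' a K (N+1) 1]
      have h1 : a K * ∏ j ∈ Finset.Ico (K+1) (N+1+1), a j = ∏ j ∈ Finset.Ico K (N+1+1), a j :=
        (Finset.prod_eq_prod_Ico_succ_bot (by omega) a).symm
      have h2 : ∏ j ∈ Finset.Ico K (N+1+1), a j = P2a * a (N+1) :=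
        (Finset.prod_Ico_succ_top (by omega) a)
      rw [hshift, ← mul_assoc, mul_comm (a K) P2a, mul_assoc, h1, h2]
      ring
    have hfact : ∀ j ∈ Finset.Ico K (N+1), a j * a (j+1) ≤ (b j)^2 := by
      intro j hj
      have hKj : K ≤ j := (Finset.mem_Ico.mp hj).1
      have hyj : |y| ≤ (j:ℝ) := hKy.trans (by exact_mod_cast hKj)
      have hy2 : y^2 ≤ (x+(j:ℝ))^2 := by
        have h1 : |y| ≤ x + j := by linarith
        nlinarith [_root_.abs_nonneg y, _root_.sq_abs y]
      have := telescope_fact (x+(j:ℝ)) y (by positivity) hy2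
      simp only [ha, hb]
      push_cast
      convert this using 2 <;> ring
    have hprod2 : P2a^2 * a (N+1) ≤ a K * P2b^2 := by
      rw [htel, hP2b, ← Finset.prod_pow]
      exact mul_le_mul_of_nonneg_left
        (Finset.prod_le_prod (fun j _ => mul_nonneg (ha0 j) (ha0 (j+1))) hfact) (ha0 K)
    have hNK2 : (N:ℝ)^2 * a K ≤ (3*(1+s))^2 * a (N+1) := by
      have haK : a K ≤ (3*(1+s))^2 := by
        simp only [ha]
        nlinarith [_root_.sq_abs y]
      have haN : (N:ℝ)^2 ≤ a (N+1) := by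
        simp only [ha]
        push_cast
        nlinarith [sq_nonneg y, Nat.cast_nonneg (α := ℝ) N]
      calc (N:ℝ)^2 * a K ≤ a (N+1) * (3*(1+s))^2 :=
            mul_le_mul haN haK (ha0 K) (ha0 (N+1))
        _ = (3*(1+s))^2 * a (N+1) := by ring
    have hP1 : P1a ≤ P1b :=
      Finset.prod_le_prod (fun j _ => ha0 j) (fun j _ => hab j)
    rw [hsplita, hsplitb]
    have haN1 : 0 < a (N+1) := by simp only [ha]; positivity
    have hP1a0 : 0 ≤ P1a := Finset.prod_nonneg (fun j _ => ha0 j)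
    have hP2a0 : 0 ≤ P2a := Finset.prod_nonneg (fun j _ => ha0 j)
    have hP1b0 : 0 ≤ P1b := Finset.prod_nonneg (fun j _ => hb0 j)
    have hP2b0 : 0 ≤ P2b := Finset.prod_nonneg (fun j _ => hb0 j)
    have h3s : (0:ℝ) ≤ 3*(1+s) := by linarith
    have hrhs : 0 ≤ 3*(1+s) * (P1b * P2b) := mul_nonneg h3s (mul_nonneg hP1b0 hP2b0)
    refine le_of_pow_le_pow_left₀ two_ne_zero hrhs ?_
    refine le_of_mul_le_mul_right ?_ haN1
    calc ((N:ℝ) * (P1a * P2a))^2 * a (N+1)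
        = ((N:ℝ)^2 * P1a^2) * (P2a^2 * a (N+1)) := by ring
      _ ≤ ((N:ℝ)^2 * P1a^2) * (a K * P2b^2) :=
          mul_le_mul_of_nonneg_left hprod2
            (mul_nonneg (sq_nonneg _) (sq_nonneg _))
      _ = ((N:ℝ)^2 * a K) * (P1a^2 * P2b^2) := by ring
      _ ≤ ((3*(1+s))^2 * a (N+1)) * (P1b^2 * P2b^2) := by
          refine mul_le_mul hNK2 ?_ (mul_nonneg (sq_nonneg _) (sq_nonneg _))
            (mul_nonneg (sq_nonneg _) (le_of_lt haN1))
          exact mul_le_mul_of_nonneg_right (pow_le_pow_left₀ hP1a0 hP1 2) (sq_nonneg _)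
      _ = (3*(1+s) * (P1b * P2b))^2 * a (N+1) := by ring

private lemma ne_zero_of_re_pos' {v : ℂ} (h : 0 < v.re) : v ≠ 0 := by
  intro h0; rw [h0, Complex.zero_re] at h; exact lt_irrefl _ h

private lemma gammaSeq_sq_bound (w : ℂ) (hw : 0 ≤ w.re) (hw0 : w ≠ 0) (N : ℕ) (hN : 1 ≤ N) :
    ‖Complex.GammaSeq (w + 1/2) N‖ ^ 2
      ≤ 3*(1+‖w‖) * ‖Complex.GammaSeq w N‖ ^ 2 := by
  set x := w.re with hx
  set y := w.im with hy
  have hN0 : (0:ℝ) < N := by exact_mod_cast Nat.pos_of_ne_zero (by omega)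
  have hre12 : ((1:ℂ)/2).re = 1/2 := by norm_num
  have him12 : ((1:ℂ)/2).im = 0 := by norm_num
  have habs_w : ∀ j : ℕ, 0 < ‖w + j‖ := by
    intro j
    refine norm_pos_iff.mpr ?_
    rcases Nat.eq_zero_or_pos j with rfl | hj
    · simpa using hw0
    · intro h
      have h2 : (w + (j:ℂ)).re = 0 := by rw [h, Complex.zero_re]
      rw [Complex.add_re, Complex.natCast_re] at h2
      have h3 : (1:ℝ) ≤ j := by exact_mod_cast hj
      linarith
  have habs_w2 : ∀ j : ℕ, 0 < ‖w + 1/2 + j‖ := by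
    intro j
    refine norm_pos_iff.mpr (ne_zero_of_re_pos' ?_)
    rw [Complex.add_re, Complex.add_re, Complex.natCast_re, hre12]
    positivity
  have hGS : ∀ v : ℂ, ‖Complex.GammaSeq v N‖
      = (N:ℝ) ^ v.re * (N ! : ℝ) / ∏ j ∈ Finset.range (N+1), ‖v + j‖ := by
    intro v
    rw [Complex.GammaSeq, norm_div, norm_mul, norm_prod]
    congr 2
    · rw [Complex.norm_natCast_cpow_of_pos (by omega)]
    · rw [Complex.norm_natCast]
  rw [hGS, hGS]
  set A := ∏ j ∈ Finset.range (N+1), ‖w + j‖ with hA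
  set B := ∏ j ∈ Finset.range (N+1), ‖w + 1/2 + j‖ with hB
  have hA0 : 0 < A := Finset.prod_pos (fun j _ => habs_w j)
  have hB0 : 0 < B := Finset.prod_pos (fun j _ => habs_w2 j)
  have hA2 : A^2 = ∏ j ∈ Finset.range (N+1), ((x+(j:ℝ))^2+y^2) := by
    rw [hA, ← Finset.prod_pow]
    refine Finset.prod_congr rfl fun j _ => ?_
    rw [Complex.sq_norm, Complex.normSq_apply, Complex.add_re, Complex.add_im,
      Complex.natCast_re, Complex.natCast_im]
    ring
  have hB2 : B^2 = ∏ j ∈ Finset.range (N+1), ((x+(j:ℝ)+1/2)^2+y^2) := by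
    rw [hB, ← Finset.prod_pow]
    refine Finset.prod_congr rfl fun j _ => ?_
    rw [Complex.sq_norm, Complex.normSq_apply, Complex.add_re, Complex.add_re,
      Complex.add_im, Complex.add_im, Complex.natCast_re, Complex.natCast_im, hre12, him12]
    ring
  have habsw : ‖w‖ = Real.sqrt (x^2+y^2) := by
    rw [Complex.norm_def, Complex.normSq_apply]
    congr 1
    ring
  have hre : (w + 1/2).re = x + 1/2 := by rw [Complex.add_re, hre12]
  rw [hre, habsw]
  rw [div_pow, div_pow, ← mul_div_assoc, div_le_div_iff₀ (pow_pos hB0 2) (pow_pos hA0 2)]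
  have e1 : ∀ c:ℝ, ((N:ℝ)^c)^2 = (N:ℝ)^(2*c) := fun c => by
    rw [← Real.rpow_natCast ((N:ℝ)^c) 2, ← Real.rpow_mul hN0.le]
    norm_num [mul_comm]
  have hNsplit : ((N:ℝ)^(x+1/2))^2 = ((N:ℝ)^x)^2 * N := by
    rw [e1, e1, show 2*(x+1/2) = 2*x + 1 by ring, Real.rpow_add hN0, Real.rpow_one]
  have hkey := key_prod x y hw N hN
  have h := mul_le_mul_of_nonneg_left hkey
    (show (0:ℝ) ≤ ((N:ℝ)^x)^2 * (N ! : ℝ)^2 by positivity)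
  calc ((N:ℝ)^(x+1/2) * (N ! : ℝ))^2 * A^2
      = ((N:ℝ)^(x+1/2))^2 * (N ! : ℝ)^2 * A^2 := by ring
    _ = (((N:ℝ)^x)^2 * (N ! : ℝ)^2) * ((N:ℝ) * ∏ j ∈ Finset.range (N+1), ((x+(j:ℝ))^2+y^2)) := by
        rw [hNsplit, hA2]; ring
    _ ≤ (((N:ℝ)^x)^2 * (N ! : ℝ)^2) * (3*(1+Real.sqrt (x^2+y^2)) *
          ∏ j ∈ Finset.range (N+1), ((x+(j:ℝ)+1/2)^2+y^2)) := h
    _ = 3*(1+Real.sqrt (x^2+y^2)) * ((N:ℝ)^x * (N ! : ℝ))^2 * B^2 := by rw [hB2]; ring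

private lemma half_step (w : ℂ) (hw : 0 ≤ w.re) (hw0 : w ≠ 0) :
    ‖Complex.Gamma (w + 1/2)‖
      ≤ Real.sqrt (3*(1+‖w‖)) * ‖Complex.Gamma w‖ := by
  have key : ‖Complex.Gamma (w+1/2)‖^2
      ≤ 3*(1+‖w‖) * ‖Complex.Gamma w‖^2 := by
    have t1 : Filter.Tendsto (fun N => ‖Complex.GammaSeq (w+1/2) N‖^2) atTop
        (nhds (‖Complex.Gamma (w+1/2)‖^2)) :=
      ((continuous_norm.tendsto _).comp (Complex.GammaSeq_tendsto_Gamma _)).pow 2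
    have t2 : Filter.Tendsto (fun N => 3*(1+‖w‖) * ‖Complex.GammaSeq w N‖^2)
        atTop (nhds (3*(1+‖w‖) * ‖Complex.Gamma w‖^2)) :=
      (((continuous_norm.tendsto _).comp (Complex.GammaSeq_tendsto_Gamma _)).pow 2).const_mul _
    refine le_of_tendsto_of_tendsto t1 t2 ?_
    filter_upwards [Filter.eventually_ge_atTop 1] with N hN
    exact gammaSeq_sq_bound w hw hw0 N hN
  have h1 : ‖Complex.Gamma (w+1/2)‖ =
      Real.sqrt (‖Complex.Gamma (w+1/2)‖^2) :=
    (Real.sqrt_sq (norm_nonneg _)).symm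
  rw [h1]
  calc Real.sqrt (‖Complex.Gamma (w+1/2)‖^2)
      ≤ Real.sqrt (3*(1+‖w‖) * ‖Complex.Gamma w‖^2) := Real.sqrt_le_sqrt key
    _ = Real.sqrt (3*(1+‖w‖)) * ‖Complex.Gamma w‖ := by
        rw [Real.sqrt_mul (by positivity), Real.sqrt_sq (norm_nonneg _)]

private lemma iter_bound (v : ℂ) (hv : 0 ≤ v.re) (hv0 : v ≠ 0) (j : ℕ) :
    ‖Complex.Gamma (v + j/2)‖
      ≤ (3*(1+‖v‖+j)) ^ ((j:ℝ)/2) * ‖Complex.Gamma v‖ := by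
  induction j with
  | zero => simp
  | succ j ih =>
    have hMj : (0:ℝ) < 3*(1+‖v‖+j) := by positivity
    have hMj1 : (0:ℝ) < 3*(1+‖v‖+((j:ℕ)+1:ℕ)) := by positivity
    have hrej : ((j:ℂ)/2).re = (j:ℝ)/2 := by
      rw [show ((j:ℂ)/2 : ℂ) = (((j:ℝ)/2 : ℝ) : ℂ) from by push_cast; ring, Complex.ofReal_re]
    have hvj : 0 ≤ (v + (j:ℂ)/2).re := by
      rw [Complex.add_re, hrej]; positivity
    have hvj0 : v + (j:ℂ)/2 ≠ 0 := by
      rcases Nat.eq_zero_or_pos j with rfl | hj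
      · simpa using hv0
      · intro h
        have h2 : (v + (j:ℂ)/2).re = 0 := by rw [h, Complex.zero_re]
        rw [Complex.add_re, hrej] at h2
        have h3 : (1:ℝ) ≤ (j:ℝ) := by exact_mod_cast hj
        linarith
    have harg : v + ((j+1:ℕ):ℂ)/2 = (v + (j:ℂ)/2) + 1/2 := by push_cast; ring
    rw [harg]
    have habsj : ‖(j:ℂ)/2‖ = (j:ℝ)/2 := by
      rw [norm_div, Complex.norm_natCast, Complex.norm_two]
    have hble : 3*(1+‖v + (j:ℂ)/2‖) ≤ 3*(1+‖v‖+((j+1:ℕ):ℝ)) := by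
      have h1 : ‖v + (j:ℂ)/2‖ ≤ ‖v‖ + (j:ℝ)/2 := by
        calc ‖v + (j:ℂ)/2‖ ≤ ‖v‖ + ‖(j:ℂ)/2‖ :=
              norm_add_le _ _
          _ = ‖v‖ + (j:ℝ)/2 := by rw [habsj]
      push_cast
      linarith
    have hb1 : Real.sqrt (3*(1+‖v + (j:ℂ)/2‖))
        ≤ (3*(1+‖v‖+((j+1:ℕ):ℝ))) ^ ((1:ℝ)/2) := by
      rw [Real.sqrt_eq_rpow]
      exact Real.rpow_le_rpow (by positivity) hble (by norm_num)
    calc ‖Complex.Gamma ((v + (j:ℂ)/2) + 1/2)‖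
        ≤ Real.sqrt (3*(1+‖v + (j:ℂ)/2‖)) * ‖Complex.Gamma (v + (j:ℂ)/2)‖ :=
          half_step _ hvj hvj0
      _ ≤ (3*(1+‖v‖+((j+1:ℕ):ℝ))) ^ ((1:ℝ)/2) *
            ((3*(1+‖v‖+(j:ℝ))) ^ ((j:ℝ)/2) * ‖Complex.Gamma v‖) := by
          refine mul_le_mul hb1 ih (norm_nonneg _) (by positivity)
      _ ≤ (3*(1+‖v‖+((j+1:ℕ):ℝ))) ^ ((1:ℝ)/2) *
            ((3*(1+‖v‖+((j+1:ℕ):ℝ))) ^ ((j:ℝ)/2) * ‖Complex.Gamma v‖) := by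
          refine mul_le_mul_of_nonneg_left (mul_le_mul_of_nonneg_right
            (Real.rpow_le_rpow (by positivity) (by push_cast; linarith) (by positivity))
            (norm_nonneg _)) (by positivity)
      _ = (3*(1+‖v‖+((j+1:ℕ):ℝ))) ^ (((j+1:ℕ):ℝ)/2) * ‖Complex.Gamma v‖ := by
          rw [← mul_assoc, ← Real.rpow_add (by push_cast; positivity)]
          push_cast
          ring_nf

/-- The inverse `c(λ)⁻¹ = 2^(iλ-n) Γ((n+iλ)/2)² / (Γ(n)Γ(iλ))` of Harish-Chandra's
`c`-function for the complex unit ball of dimension `n`. -/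
def cFunInv (n : ℕ) (lam : ℂ) : ℂ :=
  (2 : ℂ) ^ (Complex.I * lam - n) * Complex.Gamma (((n : ℂ) + Complex.I * lam) / 2) ^ 2 /
    (Complex.Gamma (n : ℂ) * Complex.Gamma (Complex.I * lam))

/-- Polynomial growth bound for the inverse of Harish-Chandra's `c`-function:
`|c(λ)|⁻¹ ≤ C₁ + C₂ |λ|^(n - 1/2)` on the half-plane `Re(iλ) ≥ 0`. -/
theorem cFunInv_poly_bound (n : ℕ) (hn : 1 ≤ n) :
    ∃ C₁ C₂ : ℝ, 0 < C₁ ∧ 0 < C₂ ∧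
      ∀ lam : ℂ, 0 ≤ (Complex.I * lam).re →
        ‖cFunInv n lam‖ ≤ C₁ + C₂ * ‖lam‖ ^ ((n : ℝ) - 1 / 2) := by
  have hGnne : Complex.Gamma (n:ℂ) ≠ 0 := by
    refine Complex.Gamma_ne_zero fun m => ?_
    intro h
    have : ((n:ℂ)).re = (-(m:ℂ)).re := by rw [h]
    simp only [Complex.natCast_re, Complex.neg_re] at this
    have h1 : (1:ℝ) ≤ (n:ℝ) := by exact_mod_cast hn
    have h2 : (0:ℝ) ≤ (m:ℝ) := Nat.cast_nonneg m
    linarith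
  set Gn : ℝ := ‖Complex.Gamma (n:ℂ)‖ with hGn
  have hGn0 : 0 < Gn := norm_pos_iff.mpr hGnne
  set B : ℝ := (2:ℝ)^(1-(n:ℝ)) * Real.sqrt Real.pi / Gn with hB
  have hB0 : 0 < B := by
    have := Real.sqrt_pos.mpr Real.pi_pos
    positivity
  set p : ℝ := (n:ℝ) - 1/2 with hp
  have hp0 : 0 < p := by
    have h1 : (1:ℝ) ≤ (n:ℝ) := by exact_mod_cast hn
    rw [hp]; linarith
  set D : ℝ := B * (3*((n:ℝ)+2))^p + 1 with hD
  have hD0 : 0 < D := by positivity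
  refine ⟨D, D, hD0, hD0, ?_⟩
  intro lam hlam
  rcases eq_or_ne lam 0 with rfl | hlam0
  · have : cFunInv n 0 = 0 := by
      simp [cFunInv, Complex.Gamma_zero]
    rw [this, norm_zero]
    have h0p : (0:ℝ) ≤ (0:ℝ) ^ p := Real.rpow_nonneg le_rfl _
    nlinarith [mul_nonneg hD0.le h0p, hD0]
  -- main case
  set z : ℂ := Complex.I * lam / 2 with hz
  have hIlam : Complex.I * lam ≠ 0 := mul_ne_zero Complex.I_ne_zero hlam0
  have hz0 : z ≠ 0 := div_ne_zero hIlam two_ne_zero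
  set t : ℝ := (Complex.I * lam).re with ht
  have hzre : z.re = t/2 := by
    rw [hz, ht]
    rw [show (Complex.I * lam / 2 : ℂ) = (Complex.I * lam) * (((1:ℝ)/2 : ℝ):ℂ) from by
      push_cast; ring]
    rw [Complex.mul_re, Complex.ofReal_re, Complex.ofReal_im]
    ring
  have hzre0 : 0 ≤ z.re := by rw [hzre]; linarith
  have hGzne : Complex.Gamma z ≠ 0 := by
    refine Complex.Gamma_ne_zero fun m => ?_
    intro h
    have h2 : z.re = -(m:ℝ) := by rw [h]; simp
    have h3 : (0:ℝ) ≤ (m:ℝ) := Nat.cast_nonneg m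
    have h4 : (m:ℝ) = 0 := by linarith [hzre0.trans_eq h2]
    have : z = 0 := by rw [h]; simp [show (m:ℝ) = 0 from h4]; exact_mod_cast h4
    exact hz0 this
  have hz12re : 0 < (z + 1/2).re := by
    rw [Complex.add_re, show ((1:ℂ)/2).re = 1/2 from by norm_num]
    linarith
  have hGz12ne : Complex.Gamma (z + 1/2) ≠ 0 := Complex.Gamma_ne_zero_of_re_pos hz12re
  set G0 : ℝ := ‖Complex.Gamma z‖ with hG0
  set Gh : ℝ := ‖Complex.Gamma (z + 1/2)‖ with hGh
  have hG00 : 0 < G0 := norm_pos_iff.mpr hGzne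
  have hGh0 : 0 < Gh := norm_pos_iff.mpr hGz12ne
  -- duplication formula
  have h2z : 2 * z = Complex.I * lam := by rw [hz]; ring
  have hdup := Complex.Gamma_mul_Gamma_add_half z
  rw [h2z] at hdup
  set Gs : ℝ := ‖Complex.Gamma (Complex.I * lam)‖ with hGs
  have habs := congrArg norm hdup
  rw [norm_mul, norm_mul, norm_mul] at habs
  have habs2 : ‖(2:ℂ) ^ ((1:ℂ) - Complex.I*lam)‖ = (2:ℝ)^(1-t) := by
    rw [show (2:ℂ) = (((2:ℝ)):ℂ) from by norm_num,
      Complex.norm_cpow_eq_rpow_re_of_pos two_pos]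
    congr 1
  have habs3 : ‖(((Real.sqrt Real.pi : ℝ)):ℂ)‖ = Real.sqrt Real.pi := by
    rw [Complex.norm_real, Real.norm_eq_abs, _root_.abs_of_nonneg (Real.sqrt_nonneg _)]
  rw [habs2, habs3] at habs
  -- habs : G0 * Gh = Gs * 2^(1-t) * √π
  have hGs0 : 0 < Gs := by
    rcases lt_or_ge 0 Gs with h | h
    · exact h
    · exfalso
      have hc : 0 < (2:ℝ)^(1-t) * Real.sqrt Real.pi :=
        mul_pos (Real.rpow_pos_of_pos two_pos _) (Real.sqrt_pos.mpr Real.pi_pos)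
      nlinarith [mul_pos hG00 hGh0, habs]
  -- express abs cFunInv
  have harg : ((n:ℂ) + Complex.I*lam)/2 = z + (n:ℂ)/2 := by rw [hz]; ring
  have habs4 : ‖(2:ℂ) ^ (Complex.I*lam - (n:ℂ))‖ = (2:ℝ)^(t-(n:ℝ)) := by
    rw [show (2:ℂ) = (((2:ℝ)):ℂ) from by norm_num,
      Complex.norm_cpow_eq_rpow_re_of_pos two_pos]
    congr 1
  have hcf : ‖cFunInv n lam‖
      = (2:ℝ)^(t - (n:ℝ)) * (‖Complex.Gamma (z + (n:ℂ)/2)‖)^2 / (Gn * Gs) := by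
    rw [cFunInv, harg, norm_div, norm_mul, norm_pow, norm_mul, habs4]
  -- bound the Gamma ratio
  set M : ℝ := 3*(1+‖z‖+(n:ℝ)) with hM
  have hM0 : (0:ℝ) < M := by positivity
  have hiter1 := iter_bound z hzre0 hz0 n
  have hz12ne : z + 1/2 ≠ 0 := fun h => by rw [h, Complex.zero_re] at hz12re; exact lt_irrefl _ hz12re
  have hiter2' := iter_bound (z+1/2) hz12re.le hz12ne (n-1)
  have harg2 : (z+1/2) + ((n-1:ℕ):ℂ)/2 = z + (n:ℂ)/2 := by
    push_cast [Nat.cast_sub hn]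
    ring
  rw [harg2] at hiter2'
  have hcast : ((n-1:ℕ):ℝ) = (n:ℝ) - 1 := by push_cast [Nat.cast_sub hn]; ring
  have habsz12 : ‖z + 1/2‖ ≤ ‖z‖ + 1/2 := by
    calc ‖z + 1/2‖ ≤ ‖z‖ + ‖(1:ℂ)/2‖ := norm_add_le _ _
      _ = ‖z‖ + 1/2 := by norm_num [norm_div]
  have hMb : 3*(1+‖z+1/2‖+((n-1:ℕ):ℝ)) ≤ M := by
    rw [hcast, hM]; linarith
  have hiter2 : ‖Complex.Gamma (z + (n:ℂ)/2)‖ ≤ M ^ (((n-1:ℕ):ℝ)/2) * Gh := by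
    refine hiter2'.trans (mul_le_mul_of_nonneg_right ?_ (norm_nonneg _))
    exact Real.rpow_le_rpow (by positivity) hMb (by positivity)
  have hGG : (‖Complex.Gamma (z + (n:ℂ)/2)‖)^2 ≤ M^p * (G0 * Gh) := by
    have hmul := mul_le_mul hiter1 hiter2 (norm_nonneg _) (by positivity)
    calc (‖Complex.Gamma (z + (n:ℂ)/2)‖)^2
        = ‖Complex.Gamma (z + (n:ℂ)/2)‖ * ‖Complex.Gamma (z + (n:ℂ)/2)‖ := sq _
      _ ≤ (M ^ ((n:ℝ)/2) * G0) * (M ^ (((n-1:ℕ):ℝ)/2) * Gh) := hmul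
      _ = (M ^ ((n:ℝ)/2) * M ^ (((n-1:ℕ):ℝ)/2)) * (G0 * Gh) := by ring
      _ = M^p * (G0 * Gh) := by
          rw [← Real.rpow_add hM0, hcast, hp]
          ring_nf
  -- put it together
  have hmain : ‖cFunInv n lam‖ ≤ B * M^p := by
    rw [hcf]
    calc (2:ℝ)^(t - (n:ℝ)) * (‖Complex.Gamma (z + (n:ℂ)/2)‖)^2 / (Gn * Gs)
        ≤ (2:ℝ)^(t - (n:ℝ)) * (M^p * (G0 * Gh)) / (Gn * Gs) := by
          exact (div_le_div_iff_of_pos_right (mul_pos hGn0 hGs0)).mpr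
            (mul_le_mul_of_nonneg_left hGG (by positivity))
      _ = (2:ℝ)^(t - (n:ℝ)) * (2:ℝ)^(1-t) * Real.sqrt Real.pi / Gn * M^p := by
          rw [habs]
          field_simp
          ring
      _ = B * M^p := by
          rw [← Real.rpow_add two_pos, hB]
          ring_nf
  -- convert M to |lam|
  have habszlam : ‖z‖ = ‖lam‖ / 2 := by
    rw [hz, norm_div, norm_mul, Complex.norm_I, one_mul, Complex.norm_two]
  refine hmain.trans ?_
  have hlam_nonneg : 0 ≤ ‖lam‖ := norm_nonneg _
  have hY0 : 0 ≤ ‖lam‖ ^ p := Real.rpow_nonneg hlam_nonneg _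
  have hn1 : (1:ℝ) ≤ (n:ℝ) := by exact_mod_cast hn
  have hE : B * (3*((n:ℝ)+2))^p ≤ D := by rw [hD]; linarith
  rcases le_or_gt (‖lam‖) 1 with hle | hgt
  · have hMle : M ≤ 3*((n:ℝ)+2) := by
      rw [hM, habszlam]; linarith
    calc B * M^p ≤ B * (3*((n:ℝ)+2))^p :=
          mul_le_mul_of_nonneg_left (Real.rpow_le_rpow hM0.le hMle hp0.le) hB0.le
      _ ≤ D := hE
      _ ≤ D + D * ‖lam‖ ^ p := le_add_of_nonneg_right (mul_nonneg hD0.le hY0)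
  · have hprod : 3*(n:ℝ) * 1 ≤ 3*(n:ℝ) * ‖lam‖ :=
      mul_le_mul_of_nonneg_left hgt.le (by positivity)
    have hMle : M ≤ 3*((n:ℝ)+2) * ‖lam‖ := by
      rw [hM, habszlam]; linarith
    calc B * M^p ≤ B * ((3*((n:ℝ)+2) * ‖lam‖)^p) :=
          mul_le_mul_of_nonneg_left (Real.rpow_le_rpow hM0.le hMle hp0.le) hB0.le
      _ = (B * (3*((n:ℝ)+2))^p) * ‖lam‖ ^ p := by
          rw [Real.mul_rpow (by positivity) hlam_nonneg]; ring
      _ ≤ D * ‖lam‖ ^ p := mul_le_mul_of_nonneg_right hE hY0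
      _ ≤ D + D * ‖lam‖ ^ p := le_add_of_nonneg_left hD0.le
end
end

section
/- Weighted Riesz–Thorin-type interpolation: if a linear operator T is bounded L¹_m → ℓ¹_m with norm t₁ and L^∞_m → ℓ^∞_m with norm t_∞, then for every 1 < p < ∞, T is bounded L^p_m → ℓ^p_m with norm at most t₁^{1/p} t_∞^{(p-1)/p}. -/
open MeasureTheory Set
open scoped ENNReal NNReal

lemma wrt_lc_pointwise {p : ℝ} (hp : 1 < p) (c : ℝ≥0∞) :
    ENNReal.ofReal (p * (p - 1)) *
      ∫⁻ μ in Ioi (0:ℝ), ENNReal.ofReal (μ ^ (p - 2)) * (c - ENNReal.ofReal μ) = c ^ p := by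
  have hp0 : 0 < p := lt_trans one_pos hp
  have hpp : 0 < p * (p - 1) := by nlinarith
  rcases eq_or_ne c ⊤ with hc | hc
  · subst hc
    have h1 : ∫⁻ μ in Ioi (0:ℝ), ENNReal.ofReal (μ ^ (p - 2)) * ((⊤:ℝ≥0∞) - ENNReal.ofReal μ)
        = ∫⁻ _ in Ioi (0:ℝ), (⊤:ℝ≥0∞) := by
      refine setLIntegral_congr_fun_ae measurableSet_Ioi (ae_of_all _ fun μ hμ => ?_)
      rw [ENNReal.top_sub ENNReal.ofReal_ne_top, ENNReal.mul_top]
      simp only [ne_eq, ENNReal.ofReal_eq_zero, not_le]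
      exact Real.rpow_pos_of_pos hμ _
    rw [h1, setLIntegral_const, ENNReal.top_rpow_of_pos hp0, Real.volume_Ioi, ENNReal.top_mul,
      ENNReal.mul_top] <;> simp [ne_eq, ENNReal.ofReal_eq_zero, not_le, hpp]
  · set R := c.toReal with hRdef
    have hR0 : 0 ≤ R := ENNReal.toReal_nonneg
    have hcR : c = ENNReal.ofReal R := (ENNReal.ofReal_toReal hc).symm
    rcases eq_or_lt_of_le hR0 with hR0' | hR0'
    · have hc0 : c = 0 := by rw [hcR, ← hR0', ENNReal.ofReal_zero]
      subst hc0
      rw [ENNReal.zero_rpow_of_pos hp0]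
      have hz : ∫⁻ μ in Ioi (0:ℝ), ENNReal.ofReal (μ ^ (p - 2)) * ((0:ℝ≥0∞) - ENNReal.ofReal μ)
          = 0 := by simp [zero_tsub]
      rw [hz, mul_zero]
    · rw [hcR]
      have hsplit : Ioi (0:ℝ) = Ioc 0 R ∪ Ioi R := (Ioc_union_Ioi_eq_Ioi hR0).symm
      rw [hsplit, lintegral_union measurableSet_Ioi (Ioc_disjoint_Ioi le_rfl)]
      have h2 : ∫⁻ μ in Ioi R, ENNReal.ofReal (μ ^ (p - 2)) * (ENNReal.ofReal R - ENNReal.ofReal μ)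
          = 0 := by
        rw [setLIntegral_congr_fun_ae measurableSet_Ioi (ae_of_all _ fun μ hμ => ?_), lintegral_zero]
        rw [tsub_eq_zero_of_le (ENNReal.ofReal_le_ofReal (le_of_lt hμ)), mul_zero]
      have i1 : IntegrableOn (fun μ : ℝ => μ ^ (p - 2)) (Ioc 0 R) volume := by
        have := intervalIntegral.intervalIntegrable_rpow' (a := 0) (b := R)
          (show (-1:ℝ) < p - 2 by linarith)
        rwa [intervalIntegrable_iff, uIoc_of_le hR0] at this
      have i2 : IntegrableOn (fun μ : ℝ => μ ^ (p - 1)) (Ioc 0 R) volume := by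
        have := intervalIntegral.intervalIntegrable_rpow' (a := 0) (b := R)
          (show (-1:ℝ) < p - 1 by linarith)
        rwa [intervalIntegrable_iff, uIoc_of_le hR0] at this
      have heqon : ∀ μ ∈ Ioc (0:ℝ) R, R * μ ^ (p - 2) - μ ^ (p - 1) = μ ^ (p - 2) * (R - μ) := by
        intro μ hμ
        have : μ ^ (p - 1) = μ ^ (p - 2) * μ := by
          rw [show p - 1 = (p - 2) + 1 by ring, Real.rpow_add_one (ne_of_gt hμ.1)]
        rw [this]; ring
      have hint : IntegrableOn (fun μ : ℝ => μ ^ (p - 2) * (R - μ)) (Ioc 0 R) volume := by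
        refine IntegrableOn.congr_fun ((i1.const_mul R).sub i2) ?_ measurableSet_Ioc
        intro μ hμ; exact heqon μ hμ
      have hval : ∫ μ in Ioc (0:ℝ) R, μ ^ (p - 2) * (R - μ) = R ^ p / (p * (p - 1)) := by
        rw [← intervalIntegral.integral_of_le hR0]
        rw [intervalIntegral.integral_congr_ae (g := fun μ => R * μ ^ (p - 2) - μ ^ (p - 1))
          (Filter.Eventually.of_forall fun μ hμ => by
            rw [uIoc_of_le hR0] at hμ; exact (heqon μ hμ).symm)]
        have j1 : IntervalIntegrable (fun μ : ℝ => μ ^ (p - 2)) volume 0 R :=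
          intervalIntegral.intervalIntegrable_rpow' (by linarith)
        have j2 : IntervalIntegrable (fun μ : ℝ => μ ^ (p - 1)) volume 0 R :=
          intervalIntegral.intervalIntegrable_rpow' (by linarith)
        rw [intervalIntegral.integral_sub (j1.const_mul R) j2,
          intervalIntegral.integral_const_mul, integral_rpow (Or.inl (by linarith)),
          integral_rpow (Or.inl (by linarith))]
        rw [show p - 2 + 1 = p - 1 by ring, show p - 1 + 1 = p by ring,
          Real.zero_rpow (by linarith : p - 1 ≠ 0), Real.zero_rpow (by positivity : p ≠ 0)]
        have hRp : R * R ^ (p - 1) = R ^ p := by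
          have h9 := Real.rpow_add hR0' 1 (p - 1)
          rw [show (1:ℝ) + (p - 1) = p by ring, Real.rpow_one] at h9
          exact h9.symm
        have h9 : p ≠ 0 := by positivity
        have h10 : p - 1 ≠ 0 := ne_of_gt (by linarith)
        rw [sub_zero, sub_zero, ← mul_div_assoc, hRp, div_sub_div _ _ h10 h9,
          show R ^ p * p - (p - 1) * R ^ p = R ^ p by ring, show (p-1)*p = p*(p-1) by ring]
      have h3 : ∫⁻ μ in Ioc (0:ℝ) R,
          ENNReal.ofReal (μ ^ (p - 2)) * (ENNReal.ofReal R - ENNReal.ofReal μ)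
          = ENNReal.ofReal (R ^ p / (p * (p - 1))) := by
        rw [setLIntegral_congr_fun_ae measurableSet_Ioc (ae_of_all _ fun μ hμ => ?_)]
        · rw [← hval, ← ofReal_integral_eq_lintegral_ofReal hint]
          exact (ae_restrict_iff' measurableSet_Ioc).mpr (ae_of_all _ fun μ hμ =>
            mul_nonneg (Real.rpow_nonneg hμ.1.le _) (by linarith [hμ.2]))
        · rw [← ENNReal.ofReal_sub _ (le_of_lt hμ.1), ← ENNReal.ofReal_mul
            (Real.rpow_nonneg hμ.1.le _)]
      rw [h2, add_zero, h3, ← ENNReal.ofReal_mul hpp.le,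
        mul_div_cancel₀ _ (ne_of_gt hpp), ENNReal.ofReal_rpow_of_pos hR0']

lemma wrt_lc_meas {α : Type*} [MeasurableSpace α] (ρ : Measure α) [SFinite ρ]
    {φ : α → ℝ≥0∞} (hφ : Measurable φ) {p : ℝ} (hp : 1 < p) :
    ∫⁻ x, φ x ^ p ∂ρ = ENNReal.ofReal (p * (p - 1)) *
      ∫⁻ μ in Ioi (0:ℝ), ENNReal.ofReal (μ ^ (p - 2)) *
        ∫⁻ x, (φ x - ENNReal.ofReal μ) ∂ρ ∂volume := by
  have hu : Measurable (Function.uncurry fun x (μ : ℝ) =>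
      ENNReal.ofReal (μ ^ (p - 2)) * (φ x - ENNReal.ofReal μ)) := by
    apply Measurable.mul
    · have : Measurable fun μ : ℝ => μ ^ (p - 2) := by fun_prop
      exact ENNReal.measurable_ofReal.comp (this.comp measurable_snd)
    · exact (hφ.comp measurable_fst).sub (ENNReal.measurable_ofReal.comp measurable_snd)
  have h1 : ∀ x, φ x ^ p = ENNReal.ofReal (p * (p - 1)) *
      ∫⁻ μ in Ioi (0:ℝ), ENNReal.ofReal (μ ^ (p - 2)) * (φ x - ENNReal.ofReal μ) :=
    fun x => (wrt_lc_pointwise hp (φ x)).symm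
  rw [lintegral_congr h1, lintegral_const_mul _ ?_]
  · congr 1
    rw [lintegral_lintegral_swap hu.aemeasurable]
    refine lintegral_congr fun μ => ?_
    exact lintegral_const_mul _ (hφ.sub measurable_const)
  · exact Measurable.lintegral_prod_right hu

lemma wrt_cov {g : ℝ → ℝ≥0∞} (hg : Measurable g) {t : ℝ} (ht : 0 < t) :
    ∫⁻ x in Ioi (0:ℝ), g (x / t) = ENNReal.ofReal t * ∫⁻ y in Ioi (0:ℝ), g y := by
  have hm : Measurable fun x : ℝ => t⁻¹ * x := measurable_const_mul _
  have hpre : (fun x : ℝ => t⁻¹ * x) ⁻¹' (Ioi 0) = Ioi 0 := by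
    ext x
    simp only [mem_preimage, mem_Ioi]
    constructor
    · intro h; by_contra hx; push_neg at hx
      nlinarith [inv_pos.mpr ht]
    · intro h; positivity
  have h1 : ∫⁻ x in Ioi (0:ℝ), g (x / t)
      = ∫⁻ y, g y ∂(Measure.map (fun x : ℝ => t⁻¹ * x) (volume.restrict (Ioi 0))) := by
    rw [lintegral_map hg hm]
    refine lintegral_congr fun x => ?_
    rw [div_eq_inv_mul]
  rw [h1]
  have h2 : Measure.map (fun x : ℝ => t⁻¹ * x) (volume.restrict (Ioi 0))
      = (ENNReal.ofReal t • volume).restrict (Ioi 0) := by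
    conv_lhs => rw [show Ioi (0:ℝ) = (fun x : ℝ => t⁻¹ * x) ⁻¹' (Ioi 0) from hpre.symm]
    rw [← Measure.restrict_map hm measurableSet_Ioi,
      Real.map_volume_mul_left (inv_ne_zero (ne_of_gt ht)), inv_inv, abs_of_pos ht]
  rw [h2, Measure.restrict_smul, lintegral_smul_measure, smul_eq_mul]

lemma wrt_count_sf : SigmaFinite (Measure.count : Measure ℕ) := by
  apply Measure.sigmaFinite_of_countable (S := Set.range (fun n : ℕ => {n}))
  · exact countable_range _
  · rintro s ⟨n, rfl⟩; simp [Measure.count_singleton]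
  · ext x; simp

lemma wrt_count_ae {P : ℕ → Prop} (hP : ∀ᵐ j ∂(Measure.count : Measure ℕ), P j) :
    ∀ j, P j := by
  intro j
  have h0 : (Measure.count : Measure ℕ) {a | ¬ P a} = 0 := ae_iff.mp hP
  rw [Measure.count_eq_zero_iff] at h0
  by_contra hj
  exact (eq_empty_iff_forall_notMem.mp h0 j) hj

/-- Weighted Riesz–Thorin-type interpolation: if a linear operator `T` is bounded
`L¹_m → ℓ¹_m` with norm `t₁` and `L^∞_m → ℓ^∞_m` with norm `t∞`, then for every
`1 < p < ∞`, `T` is bounded `L^p_m → ℓ^p_m` with norm at most `t₁^(1/p) t∞^((p-1)/p)`. -/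
theorem weighted_riesz_thorin {X : Type*} [MeasurableSpace X] (ν : Measure X)
    (m : X → ℝ) (hmpos : ∀ x, 0 < m x)
    (mseq : ℕ → ℝ) (hmseqpos : ∀ j, 0 < mseq j)
    (T : (X → ℂ) → (ℕ → ℂ))
    (hadd : ∀ f g, T (f + g) = T f + T g)
    (hsmul : ∀ (c : ℂ) (f : X → ℂ), T (c • f) = c • T f)
    (t₁ tinf : ℝ) (ht₁ : 0 ≤ t₁) (htinf : 0 ≤ tinf)
    (hbdd₁ : ∀ f : X → ℂ,
      eLpNorm (fun j => T f j * (mseq j : ℂ)) 1 Measure.count ≤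
        ENNReal.ofReal t₁ * eLpNorm (fun x => f x * (m x : ℂ)) 1 ν)
    (hbddinf : ∀ f : X → ℂ,
      eLpNorm (fun j => T f j * (mseq j : ℂ)) ⊤ Measure.count ≤
        ENNReal.ofReal tinf * eLpNorm (fun x => f x * (m x : ℂ)) ⊤ ν)
    (p : ℝ) (hp : 1 < p) :
    ∀ f : X → ℂ,
      eLpNorm (fun j => T f j * (mseq j : ℂ)) (ENNReal.ofReal p) Measure.count ≤
        ENNReal.ofReal (t₁ ^ (1 / p) * tinf ^ ((p - 1) / p)) *
          eLpNorm (fun x => f x * (m x : ℂ)) (ENNReal.ofReal p) ν := by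
  intro f
  haveI : SigmaFinite (Measure.count : Measure ℕ) := wrt_count_sf
  have hp0 : 0 < p := lt_trans one_pos hp
  have hp1 : (0:ℝ) < 1 / p := by positivity
  have hq0 : (ENNReal.ofReal p) ≠ 0 := by
    simp only [ne_eq, ENNReal.ofReal_eq_zero, not_le]; exact hp0
  have hqt : (ENNReal.ofReal p) ≠ ⊤ := ENNReal.ofReal_ne_top
  have hqr : (ENNReal.ofReal p).toReal = p := ENNReal.toReal_ofReal hp0.le
  set a : ℕ → ℝ≥0∞ := fun j => (‖T f j * (mseq j : ℂ)‖₊ : ℝ≥0∞) with ha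
  set w : X → ℝ≥0∞ := fun x => (‖f x * (m x : ℂ)‖₊ : ℝ≥0∞) with hw
  have hLHS : eLpNorm (fun j => T f j * (mseq j : ℂ)) (ENNReal.ofReal p) Measure.count
      = (∫⁻ j, a j ^ p ∂Measure.count) ^ (1 / p) := by
    rw [eLpNorm_eq_lintegral_rpow_enorm_toReal hq0 hqt, hqr]; rfl
  have hRHS : eLpNorm (fun x => f x * (m x : ℂ)) (ENNReal.ofReal p) ν
      = (∫⁻ x, w x ^ p ∂ν) ^ (1 / p) := by
    rw [eLpNorm_eq_lintegral_rpow_enorm_toReal hq0 hqt, hqr]; rfl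
  have hzero : (∀ j, a j = 0) →
      eLpNorm (fun j => T f j * (mseq j : ℂ)) (ENNReal.ofReal p) Measure.count = 0 := by
    intro h
    rw [hLHS]
    have h2 : ∀ j, a j ^ p = 0 := fun j => by rw [h j, ENNReal.zero_rpow_of_pos hp0]
    simp only [h2, lintegral_zero]
    rw [ENNReal.zero_rpow_of_pos hp1]
  rcases eq_or_lt_of_le ht₁ with ht₁0 | ht₁pos
  · -- t₁ = 0
    have h := hbdd₁ f
    rw [← ht₁0, ENNReal.ofReal_zero, zero_mul, eLpNorm_one_eq_lintegral_enorm] at h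
    have h0 : ∫⁻ j, a j ∂Measure.count = 0 := le_antisymm h (zero_le)
    have hj : ∀ j, a j = 0 := by
      have h1 := (lintegral_eq_zero_iff (measurable_from_top (f := a))).mp h0
      exact fun j => wrt_count_ae h1 j
    rw [hzero hj]
    exact zero_le
  rcases eq_or_lt_of_le htinf with htinf0 | htinfpos
  · -- tinf = 0
    have h := hbddinf f
    rw [← htinf0, ENNReal.ofReal_zero, zero_mul, eLpNorm_exponent_top] at h
    have h0 : eLpNormEssSup (fun j => T f j * (mseq j : ℂ)) Measure.count = 0 :=
      le_antisymm h (zero_le)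
    have hj : ∀ j, a j = 0 := by
      have h1 := eLpNormEssSup_eq_zero_iff.mp h0
      intro j
      have hz := wrt_count_ae h1 j
      simp only [ha, hz]
      simp
    rw [hzero hj]
    exact zero_le
  -- main case : t₁ > 0, tinf > 0
  set I := ∫⁻ x, w x ^ p ∂ν with hIdef
  rcases eq_or_ne I ⊤ with hItop | hIne
  · rw [hRHS, hItop, ENNReal.top_rpow_of_pos hp1, ENNReal.mul_top]
    · exact le_top
    · simp only [ne_eq, ENNReal.ofReal_eq_zero, not_le]
      exact mul_pos (Real.rpow_pos_of_pos ht₁pos _) (Real.rpow_pos_of_pos htinfpos _)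
  -- I ≠ ⊤
  set Fw : ℝ → ℝ≥0∞ := fun μ => ∫⁻ x, (w x - ENNReal.ofReal μ) ∂ν with hFw
  have key : ∀ μ : ℝ, 0 ≤ μ →
      ∫⁻ j, (a j - ENNReal.ofReal (tinf * μ)) ∂Measure.count ≤ ENNReal.ofReal t₁ * Fw μ := by
    intro μ hμ0
    set hh : X → ℂ := fun x => if ‖f x * (m x : ℂ)‖ ≤ μ then f x
      else ((μ / ‖f x * (m x : ℂ)‖ : ℝ) : ℂ) * f x with hhdef
    set g : X → ℂ := fun x => f x - hh x with hgdef
    have hfgh : ∀ j, T f j = T g j + T hh j := by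
      intro j
      have hsum : f = g + hh := by
        funext x
        show f x = g x + hh x
        simp only [hgdef]
        ring
      rw [hsum, hadd]
      rfl
    have hhb : ∀ x, ‖hh x * (m x : ℂ)‖ ≤ μ := by
      intro x
      by_cases hc : ‖f x * (m x : ℂ)‖ ≤ μ
      · simp only [hhdef, if_pos hc]
        exact hc
      · push_neg at hc
        have hr : 0 < ‖f x * (m x : ℂ)‖ := lt_of_le_of_lt hμ0 hc
        simp only [hhdef, if_neg (not_le.mpr hc)]
        rw [mul_assoc, norm_mul, Complex.norm_real, Real.norm_eq_abs,
          abs_of_nonneg (div_nonneg hμ0 hr.le), div_mul_cancel₀ _ (ne_of_gt hr)]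
    have hgnorm : ∀ x, (‖g x * (m x : ℂ)‖₊ : ℝ≥0∞) = w x - ENNReal.ofReal μ := by
      intro x
      by_cases hc : ‖f x * (m x : ℂ)‖ ≤ μ
      · have hg0 : g x = 0 := by
          simp only [hgdef, hhdef, if_pos hc, sub_self]
        rw [hg0, zero_mul, nnnorm_zero, ENNReal.coe_zero]
        symm
        rw [tsub_eq_zero_of_le]
        rw [hw]
        simp only []
        rw [← enorm_eq_nnnorm, ← ofReal_norm]
        exact ENNReal.ofReal_le_ofReal hc
      · push_neg at hc
        have hr : 0 < ‖f x * (m x : ℂ)‖ := lt_of_le_of_lt hμ0 hc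
        have hdiv : μ / ‖f x * (m x : ℂ)‖ ≤ 1 := (div_le_one hr).mpr hc.le
        have hgx : g x * (m x : ℂ)
            = ((1 - μ / ‖f x * (m x : ℂ)‖ : ℝ) : ℂ) * (f x * (m x : ℂ)) := by
          simp only [hgdef, hhdef, if_neg (not_le.mpr hc)]
          push_cast
          ring
        rw [← enorm_eq_nnnorm, ← ofReal_norm, hgx, norm_mul, Complex.norm_real, Real.norm_eq_abs,
          abs_of_nonneg (by linarith), sub_mul, one_mul, div_mul_cancel₀ _ (ne_of_gt hr)]
        rw [ENNReal.ofReal_sub _ hμ0, hw]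
        simp only []
        rw [← enorm_eq_nnnorm, ← ofReal_norm]
    have hinf2 : ∀ j, (‖T hh j * (mseq j : ℂ)‖₊ : ℝ≥0∞) ≤ ENNReal.ofReal (tinf * μ) := by
      have h1 := hbddinf hh
      rw [eLpNorm_exponent_top, eLpNorm_exponent_top] at h1
      have h2 : eLpNormEssSup (fun x => hh x * (m x : ℂ)) ν ≤ ENNReal.ofReal μ :=
        eLpNormEssSup_le_of_ae_bound (ae_of_all _ hhb)
      have h3 : eLpNormEssSup (fun j => T hh j * (mseq j : ℂ)) Measure.count
          ≤ ENNReal.ofReal (tinf * μ) := by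
        refine le_trans h1 (le_trans (mul_le_mul_right h2 _) ?_)
        rw [← ENNReal.ofReal_mul htinf]
      have h4 : ∀ᵐ j ∂(Measure.count : Measure ℕ), (‖T hh j * (mseq j : ℂ)‖₊ : ℝ≥0∞)
          ≤ eLpNormEssSup (fun j => T hh j * (mseq j : ℂ)) Measure.count := ae_le_essSup
      exact fun j => le_trans (wrt_count_ae h4 j) h3
    have hjle : ∀ j, a j - ENNReal.ofReal (tinf * μ) ≤ (‖T g j * (mseq j : ℂ)‖₊ : ℝ≥0∞) := by
      intro j
      refine tsub_le_iff_right.mpr ?_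
      have hTj : T f j * (mseq j : ℂ) = T g j * (mseq j : ℂ) + T hh j * (mseq j : ℂ) := by
        rw [hfgh j]; ring
      calc a j = (‖T g j * (mseq j : ℂ) + T hh j * (mseq j : ℂ)‖₊ : ℝ≥0∞) := by
            rw [ha]; simp only []; rw [hTj]
      _ ≤ (‖T g j * (mseq j : ℂ)‖₊ : ℝ≥0∞) + (‖T hh j * (mseq j : ℂ)‖₊ : ℝ≥0∞) := by
            exact_mod_cast nnnorm_add_le _ _
      _ ≤ (‖T g j * (mseq j : ℂ)‖₊ : ℝ≥0∞) + ENNReal.ofReal (tinf * μ) :=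
            add_le_add_right (hinf2 j) _
    calc ∫⁻ j, (a j - ENNReal.ofReal (tinf * μ)) ∂Measure.count
        ≤ ∫⁻ j, (‖T g j * (mseq j : ℂ)‖₊ : ℝ≥0∞) ∂Measure.count := lintegral_mono hjle
    _ = eLpNorm (fun j => T g j * (mseq j : ℂ)) 1 Measure.count :=
        (eLpNorm_one_eq_lintegral_enorm (f := fun j => T g j * (mseq j : ℂ))).symm
    _ ≤ ENNReal.ofReal t₁ * eLpNorm (fun x => g x * (m x : ℂ)) 1 ν := hbdd₁ g
    _ = ENNReal.ofReal t₁ * Fw μ := by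
        rw [eLpNorm_one_eq_lintegral_enorm, hFw]
        congr 1
        exact lintegral_congr hgnorm
  -- measurable minorant of w
  choose Φ hΦm hΦle hΦeq using fun q : ℚ =>
    exists_measurable_le_lintegral_eq ν (fun x => w x - ENNReal.ofReal (q : ℝ))
  set v : X → ℝ≥0∞ := fun x => ⨆ q : ℚ,
    if 0 < (q : ℝ) then (if Φ q x = 0 then 0 else Φ q x + ENNReal.ofReal (q : ℝ)) else 0
    with hvdef
  have hvm : Measurable v := by
    refine Measurable.iSup fun q => ?_
    by_cases hq : 0 < (q : ℝ)
    · simp only [if_pos hq]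
      exact Measurable.ite ((hΦm q) (measurableSet_singleton 0)) measurable_const
        ((hΦm q).add_const _)
    · simp only [if_neg hq]
      exact measurable_const
  have hvw : ∀ x, v x ≤ w x := by
    intro x
    refine iSup_le fun q => ?_
    by_cases hq : 0 < (q : ℝ)
    · rw [if_pos hq]
      by_cases h0 : Φ q x = 0
      · rw [if_pos h0]; exact zero_le
      · rw [if_neg h0]
        have h1 := hΦle q x
        have h2 : ENNReal.ofReal (q : ℝ) ≤ w x := by
          by_contra hlt
          push_neg at hlt
          have h3 : w x - ENNReal.ofReal (q : ℝ) = 0 := tsub_eq_zero_of_le hlt.le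
          exact h0 (le_antisymm (h3 ▸ h1) (zero_le))
        calc Φ q x + ENNReal.ofReal (q : ℝ)
            ≤ (w x - ENNReal.ofReal (q : ℝ)) + ENNReal.ofReal (q : ℝ) := add_le_add_left h1 _
        _ = w x := tsub_add_cancel_of_le h2
    · rw [if_neg hq]; exact zero_le
  have hvq : ∀ (q : ℚ), 0 < (q : ℝ) → ∀ x, Φ q x ≤ v x - ENNReal.ofReal (q : ℝ) := by
    intro q hq x
    by_cases h0 : Φ q x = 0
    · rw [h0]; exact zero_le
    · refine ENNReal.le_sub_of_add_le_right ENNReal.ofReal_ne_top ?_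
      have hle := le_iSup (fun q' : ℚ =>
        if 0 < (q' : ℝ) then (if Φ q' x = 0 then 0 else Φ q' x + ENNReal.ofReal (q' : ℝ))
        else 0) q
      rw [if_pos hq, if_neg h0] at hle
      simpa only [hvdef] using hle
  have hBC : ∀ μ : ℝ, 0 ≤ μ → Fw μ ≤ ∫⁻ x, (v x - ENNReal.ofReal μ) ∂ν := by
    intro μ hμ0
    obtain ⟨ψ, hψm, hψle, hψeq⟩ :=
      exists_measurable_le_lintegral_eq ν (fun x => w x - ENNReal.ofReal μ)
    have hFwμ : Fw μ = ∫⁻ x, ψ x ∂ν := by rw [hFw]; exact hψeq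
    rw [hFwμ]
    have hinf0 : (⨅ n : ℕ, ENNReal.ofReal (1 / (n + 1) : ℝ)) = 0 := by
      rw [← ENNReal.bot_eq_zero, iInf_eq_bot]
      intro b hb
      obtain ⟨n, hn⟩ := ENNReal.exists_inv_nat_lt (ne_of_gt hb)
      refine ⟨n, lt_of_le_of_lt ?_ hn⟩
      rw [one_div, ENNReal.ofReal_inv_of_pos (by positivity)]
      refine ENNReal.inv_le_inv.mpr ?_
      rw [ENNReal.ofReal_add (by positivity) zero_le_one, ENNReal.ofReal_natCast,
        ENNReal.ofReal_one]
      exact le_self_add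
    have hmono : Monotone (fun n : ℕ => fun x => ψ x - ENNReal.ofReal (1 / (n + 1) : ℝ)) := by
      intro n1 n2 h x
      refine tsub_le_tsub_left (ENNReal.ofReal_le_ofReal ?_) _
      have hcast : ((n1 : ℝ) + 1) ≤ ((n2 : ℝ) + 1) := by
        have := (Nat.cast_le (α := ℝ)).mpr h
        linarith
      exact one_div_le_one_div_of_le (by positivity) hcast
    have hsup : ∀ x, (⨆ n : ℕ, (ψ x - ENNReal.ofReal (1 / (n + 1) : ℝ))) = ψ x := by
      intro x
      rw [← ENNReal.sub_iInf, hinf0, tsub_zero]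
    calc ∫⁻ x, ψ x ∂ν
        = ∫⁻ x, ⨆ n : ℕ, (ψ x - ENNReal.ofReal (1 / (n + 1) : ℝ)) ∂ν :=
          lintegral_congr fun x => (hsup x).symm
    _ = ⨆ n : ℕ, ∫⁻ x, (ψ x - ENNReal.ofReal (1 / (n + 1) : ℝ)) ∂ν :=
          lintegral_iSup (fun n => hψm.sub measurable_const) hmono
    _ ≤ ∫⁻ x, (v x - ENNReal.ofReal μ) ∂ν := by
          refine iSup_le fun n => ?_
          obtain ⟨q, hq1, hq2⟩ :=
            exists_rat_btwn (lt_add_of_pos_right μ (by positivity : (0:ℝ) < 1 / (n + 1)))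
          have hq0' : 0 < (q : ℝ) := lt_of_le_of_lt hμ0 hq1
          have hpt : ∀ x, ψ x - ENNReal.ofReal (1 / (n + 1) : ℝ)
              ≤ w x - ENNReal.ofReal (q : ℝ) := by
            intro x
            have h1 : ψ x ≤ w x - ENNReal.ofReal μ := hψle x
            calc ψ x - ENNReal.ofReal (1 / (n + 1) : ℝ)
                ≤ (w x - ENNReal.ofReal μ) - ENNReal.ofReal ((q : ℝ) - μ) :=
                  tsub_le_tsub h1 (ENNReal.ofReal_le_ofReal (by linarith))
            _ = w x - ENNReal.ofReal (q : ℝ) := by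
                  rw [tsub_tsub, ← ENNReal.ofReal_add hμ0 (by linarith : (0:ℝ) ≤ (q : ℝ) - μ),
                    show μ + ((q : ℝ) - μ) = (q : ℝ) by ring]
          calc ∫⁻ x, (ψ x - ENNReal.ofReal (1 / (n + 1) : ℝ)) ∂ν
              ≤ ∫⁻ x, (w x - ENNReal.ofReal (q : ℝ)) ∂ν := lintegral_mono hpt
          _ = ∫⁻ x, Φ q x ∂ν := hΦeq q
          _ ≤ ∫⁻ x, (v x - ENNReal.ofReal (q : ℝ)) ∂ν := lintegral_mono (hvq q hq0')
          _ ≤ ∫⁻ x, (v x - ENNReal.ofReal μ) ∂ν :=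
                lintegral_mono fun x => tsub_le_tsub_left (ENNReal.ofReal_le_ofReal hq1.le) _
  -- assembly
  set Fv : ℝ → ℝ≥0∞ := fun μ => ∫⁻ x, (v x - ENNReal.ofReal μ) ∂ν with hFvdef
  have hFvanti : Antitone Fv := by
    intro μ1 μ2 h
    simp only [hFvdef]
    exact lintegral_mono fun x => tsub_le_tsub_left (ENNReal.ofReal_le_ofReal h) _
  have hFvm : Measurable Fv := hFvanti.measurable
  have ham : Measurable a := measurable_from_top
  have hE := wrt_lc_meas Measure.count ham hp
  set gg : ℝ → ℝ≥0∞ := fun μ => ENNReal.ofReal (μ ^ (p - 2)) * Fv μ with hggdef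
  have hggm : Measurable gg := by
    refine Measurable.mul ?_ hFvm
    exact ENNReal.measurable_ofReal.comp (by fun_prop)
  have hGb : ∀ lam : ℝ, lam ∈ Ioi (0:ℝ) →
      ENNReal.ofReal (lam ^ (p - 2)) * ∫⁻ j, (a j - ENNReal.ofReal lam) ∂Measure.count
      ≤ (ENNReal.ofReal t₁ * ENNReal.ofReal (tinf ^ (p - 2))) * gg (lam / tinf) := by
    intro lam hlam
    rw [mem_Ioi] at hlam
    have h1 := key (lam / tinf) (le_of_lt (div_pos hlam htinfpos))
    rw [mul_div_cancel₀ _ (ne_of_gt htinfpos)] at h1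
    have h2 : ∫⁻ j, (a j - ENNReal.ofReal lam) ∂Measure.count
        ≤ ENNReal.ofReal t₁ * Fv (lam / tinf) :=
      h1.trans (mul_le_mul_right (hBC _ (le_of_lt (div_pos hlam htinfpos))) _)
    have h3 : lam ^ (p - 2) = tinf ^ (p - 2) * (lam / tinf) ^ (p - 2) := by
      rw [← Real.mul_rpow htinf (by positivity)]
      congr 1
      field_simp
    calc ENNReal.ofReal (lam ^ (p - 2)) * ∫⁻ j, (a j - ENNReal.ofReal lam) ∂Measure.count
        ≤ ENNReal.ofReal (lam ^ (p - 2)) * (ENNReal.ofReal t₁ * Fv (lam / tinf)) :=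
          mul_le_mul_right h2 _
    _ = (ENNReal.ofReal t₁ * ENNReal.ofReal (tinf ^ (p - 2))) * gg (lam / tinf) := by
          simp only [hggdef]
          rw [h3, ENNReal.ofReal_mul (Real.rpow_nonneg htinf _)]
          ring
  have hfinalstep : ENNReal.ofReal (p * (p - 1)) * (∫⁻ mu in Ioi (0:ℝ), gg mu ∂volume) ≤ I := by
    have hvint : ∫⁻ x, v x ^ p ∂ν ≤ I := by
      rw [hIdef]
      exact lintegral_mono fun x => ENNReal.rpow_le_rpow (hvw x) hp0.le
    set S : Set X := {x | 0 < v x} with hSdef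
    have hS : MeasurableSet S := measurableSet_lt measurable_const hvm
    haveI hsf : SigmaFinite (ν.restrict S) := by
      apply Measure.sigmaFinite_of_countable
        (S := Set.range fun n : ℕ => {x | ((n : ℝ≥0∞) + 1)⁻¹ < v x} ∪ Sᶜ)
      · exact countable_range _
      · rintro s ⟨n, rfl⟩
        have hmeas : MeasurableSet ({x | ((n : ℝ≥0∞) + 1)⁻¹ < v x} ∪ Sᶜ) :=
          (measurableSet_lt measurable_const hvm).union hS.compl
        rw [Measure.restrict_apply hmeas]
        have hsub : ({x | ((n : ℝ≥0∞) + 1)⁻¹ < v x} ∪ Sᶜ) ∩ S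
            ⊆ {x | (((n : ℝ≥0∞) + 1)⁻¹) ^ p ≤ v x ^ p} := by
          rintro x ⟨hx1 | hx2, hxS⟩
          · exact ENNReal.rpow_le_rpow (le_of_lt hx1) hp0.le
          · exact absurd hxS hx2
        have hvpm : Measurable fun x => v x ^ p := by fun_prop
        have hcheb := mul_meas_ge_le_lintegral₀ (μ := ν) hvpm.aemeasurable
          ((((n : ℝ≥0∞) + 1)⁻¹) ^ p)
        have hne : ((n : ℝ≥0∞) + 1)⁻¹ ≠ 0 := by
          refine ENNReal.inv_ne_zero.mpr ?_
          exact ENNReal.add_ne_top.mpr ⟨ENNReal.natCast_ne_top n, ENNReal.one_ne_top⟩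
        have hε : ((((n : ℝ≥0∞) + 1)⁻¹) ^ p) ≠ 0 := by
          rw [Ne, ENNReal.rpow_eq_zero_iff]
          rintro (⟨h, _⟩ | ⟨_, hneg⟩)
          · exact hne h
          · linarith
        have hlt : (((n : ℝ≥0∞) + 1)⁻¹) ^ p
            * ν {x | (((n : ℝ≥0∞) + 1)⁻¹) ^ p ≤ v x ^ p} < ⊤ :=
          lt_of_le_of_lt (hcheb.trans hvint) (lt_top_iff_ne_top.mpr hIne)
        have hfin : ν {x | (((n : ℝ≥0∞) + 1)⁻¹) ^ p ≤ v x ^ p} < ⊤ := by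
          by_contra htop
          push_neg at htop
          rw [top_le_iff.mp htop, ENNReal.mul_top hε] at hlt
          exact absurd hlt (lt_irrefl ⊤)
        exact lt_of_le_of_lt (measure_mono hsub) hfin
      · apply eq_univ_of_forall
        intro x
        rw [mem_sUnion]
        by_cases hx : 0 < v x
        · obtain ⟨n, hn⟩ := ENNReal.exists_inv_nat_lt (ne_of_gt hx)
          exact ⟨_, mem_range_self n,
            Or.inl (lt_of_le_of_lt (ENNReal.inv_le_inv.mpr le_self_add) hn)⟩
        · exact ⟨_, mem_range_self 0, Or.inr hx⟩
    have hres : ∀ mu : ℝ, mu ∈ Ioi (0:ℝ) →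
        ∫⁻ x, (v x - ENNReal.ofReal mu) ∂(ν.restrict S) = Fv mu := by
      intro mu hmu
      have hind : ∀ x, (v x - ENNReal.ofReal mu)
          = S.indicator (fun x => v x - ENNReal.ofReal mu) x := by
        intro x
        by_cases hx : x ∈ S
        · rw [indicator_of_mem hx]
        · rw [indicator_of_notMem hx]
          have hv0 : v x = 0 := by
            by_contra h
            exact hx (pos_iff_ne_zero.mpr h)
          rw [hv0, zero_tsub]
      simp only [hFvdef]
      conv_rhs => rw [lintegral_congr hind, lintegral_indicator hS]
    have hlc := wrt_lc_meas (ν.restrict S) hvm hp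
    have hcongr : ∫⁻ mu in Ioi (0:ℝ), ENNReal.ofReal (mu ^ (p - 2))
        * ∫⁻ x, (v x - ENNReal.ofReal mu) ∂(ν.restrict S) ∂volume
        = ∫⁻ mu in Ioi (0:ℝ), gg mu ∂volume := by
      refine setLIntegral_congr_fun_ae measurableSet_Ioi (ae_of_all _ fun mu hmu => ?_)
      rw [hres mu hmu]
    rw [hcongr] at hlc
    rw [← hlc]
    exact le_trans (lintegral_mono' Measure.restrict_le_self (le_refl _)) hvint
  have hchain : ∫⁻ j, a j ^ p ∂Measure.count
      ≤ ENNReal.ofReal t₁ * ENNReal.ofReal (tinf ^ (p - 1)) * I := by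
    rw [hE]
    have hs1 : ∫⁻ lam in Ioi (0:ℝ), ENNReal.ofReal (lam ^ (p - 2))
        * ∫⁻ j, (a j - ENNReal.ofReal lam) ∂Measure.count ∂volume
        ≤ ∫⁻ lam in Ioi (0:ℝ),
          (ENNReal.ofReal t₁ * ENNReal.ofReal (tinf ^ (p - 2))) * gg (lam / tinf) ∂volume := by
      refine setLIntegral_mono ?_ hGb
      exact measurable_const.mul (show Measurable fun lam : ℝ => gg (lam / tinf) from
        hggm.comp (measurable_id.div_const _))
    have hs2 : ∫⁻ lam in Ioi (0:ℝ),
        (ENNReal.ofReal t₁ * ENNReal.ofReal (tinf ^ (p - 2))) * gg (lam / tinf) ∂volume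
        = (ENNReal.ofReal t₁ * ENNReal.ofReal (tinf ^ (p - 2)))
          * (ENNReal.ofReal tinf * ∫⁻ mu in Ioi (0:ℝ), gg mu ∂volume) := by
      rw [lintegral_const_mul _ (show Measurable fun lam : ℝ => gg (lam / tinf) from
        hggm.comp (measurable_id.div_const _)), wrt_cov hggm htinfpos]
    have hs3 : ENNReal.ofReal (tinf ^ (p - 1))
        = ENNReal.ofReal (tinf ^ (p - 2)) * ENNReal.ofReal tinf := by
      rw [← ENNReal.ofReal_mul (Real.rpow_nonneg htinf _)]
      congr 1
      rw [show p - 1 = (p - 2) + 1 by ring, Real.rpow_add_one (ne_of_gt htinfpos)]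
    calc ENNReal.ofReal (p * (p - 1)) * ∫⁻ lam in Ioi (0:ℝ), ENNReal.ofReal (lam ^ (p - 2))
          * ∫⁻ j, (a j - ENNReal.ofReal lam) ∂Measure.count ∂volume
        ≤ ENNReal.ofReal (p * (p - 1)) * ((ENNReal.ofReal t₁ * ENNReal.ofReal (tinf ^ (p - 2)))
          * (ENNReal.ofReal tinf * ∫⁻ mu in Ioi (0:ℝ), gg mu ∂volume)) := by
          refine mul_le_mul_right ?_ _
          exact le_of_le_of_eq hs1 hs2
    _ = ENNReal.ofReal t₁ * ENNReal.ofReal (tinf ^ (p - 1))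
          * (ENNReal.ofReal (p * (p - 1)) * ∫⁻ mu in Ioi (0:ℝ), gg mu ∂volume) := by
          rw [hs3]; ring
    _ ≤ ENNReal.ofReal t₁ * ENNReal.ofReal (tinf ^ (p - 1)) * I :=
          mul_le_mul_right hfinalstep _
  rw [hLHS, hRHS]
  calc (∫⁻ j, a j ^ p ∂Measure.count) ^ (1 / p)
      ≤ (ENNReal.ofReal t₁ * ENNReal.ofReal (tinf ^ (p - 1)) * I) ^ (1 / p) :=
        ENNReal.rpow_le_rpow hchain (by positivity)
  _ = ((ENNReal.ofReal t₁) ^ (1 / p) * (ENNReal.ofReal (tinf ^ (p - 1))) ^ (1 / p))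
        * I ^ (1 / p) := by
        rw [ENNReal.mul_rpow_of_nonneg _ _ (by positivity),
          ENNReal.mul_rpow_of_nonneg _ _ (by positivity)]
  _ = ENNReal.ofReal (t₁ ^ (1 / p) * tinf ^ ((p - 1) / p)) * I ^ (1 / p) := by
        rw [ENNReal.ofReal_rpow_of_pos ht₁pos,
          ENNReal.ofReal_rpow_of_pos (Real.rpow_pos_of_pos htinfpos _),
          ← ENNReal.ofReal_mul (by positivity)]
        congr 2
        rw [← Real.rpow_mul htinf, mul_one_div]
end

section
/- If a real sequence (a_j) is nonincreasing, positive, and in ℓ^p for 0 < p < q, then with α = 1/p - 1/q, the tail quantity N^α E_{N,q}(a) = N^α (Σ_{j≥N} a_j^q)^{1/q} tends to 0 as N → ∞. -/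
open MeasureTheory Filter
open scoped ENNReal

noncomputable section

/-- The `q`-tail `E_{N,q}(a) = (Σ_{j≥N} a_j^q)^(1/q)` (ess-sup for `q = ∞`). -/
def tailNorm (a : ℕ → ℝ) (q : ℝ≥0∞) (N : ℕ) : ℝ≥0∞ :=
  eLpNorm (fun j : ℕ => if N ≤ j then a j else 0) q Measure.count

/-- If a positive nonincreasing sequence lies in `ℓ^p`, `0 < p < q ≤ ∞`, then with
`α = 1/p - 1/q` the tail quantity `N^α E_{N,q}(a)` tends to `0` as `N → ∞`. -/
theorem tail_norm_tendsto_zero (p : ℝ) (q : ℝ≥0∞) (hp : 0 < p) (hpq : ENNReal.ofReal p < q)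
    (a : ℕ → ℝ) (hapos : ∀ j, 0 < a j) (hmono : Antitone a)
    (hlp : (∑' j : ℕ, ENNReal.ofReal (a j) ^ p) < ⊤) :
    Tendsto (fun N : ℕ => ((N : ℝ≥0∞)) ^ (1 / p - (1 / q).toReal) * tailNorm a q N)
      atTop (nhds 0) := by
  classical
  set A : ℕ → ℝ≥0∞ := fun j => ENNReal.ofReal (a j) with hA
  have hAne : ∀ j, A j ≠ 0 := fun j => (ENNReal.ofReal_pos.2 (hapos j)).ne'
  have hAnt : ∀ j, A j ≠ ⊤ := fun j => ENNReal.ofReal_ne_top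
  have hAmono : Antitone A := fun m n h => ENNReal.ofReal_le_ofReal (hmono h)
  set T : ℕ → ℝ≥0∞ := fun N => ∑' j, if N ≤ j then A j ^ p else 0 with hT
  -- the tails of the `p`-sum
  have hTshift : ∀ N, T N = ∑' j, A (j + N) ^ p := by
    intro N
    have hsum := Summable.sum_add_tsum_nat_add' (f := fun j => if N ≤ j then A j ^ p else 0)
      (k := N) ENNReal.summable
    have h1 : ∑ i ∈ Finset.range N, (if N ≤ i then A i ^ p else 0) = 0 := by
      apply Finset.sum_eq_zero; intro i hi
      simp [Nat.not_le.2 (Finset.mem_range.1 hi)]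
    have h2 : (fun j => if N ≤ j + N then A (j + N) ^ p else 0) = fun j => A (j + N) ^ p := by
      funext j; simp [Nat.le_add_left]
    rw [hT]
    simp only [← hsum, h1, zero_add, h2]
  have hTtend : Tendsto T atTop (nhds 0) :=
    (ENNReal.tendsto_sum_nat_add _ hlp.ne).congr fun N => (hTshift N).symm
  -- chunk estimate
  have hchunk : ∀ M N : ℕ, M ≤ N → ((N + 1 - M : ℕ) : ℝ≥0∞) * A N ^ p ≤ T M := by
    intro M N h
    calc ((N + 1 - M : ℕ) : ℝ≥0∞) * A N ^ p
        = ∑ _j ∈ Finset.Icc M N, A N ^ p := by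
          rw [Finset.sum_const, Nat.card_Icc, nsmul_eq_mul]
      _ ≤ ∑ j ∈ Finset.Icc M N, (if M ≤ j then A j ^ p else 0) := by
          apply Finset.sum_le_sum
          intro j hj
          rw [Finset.mem_Icc] at hj
          rw [if_pos hj.1]
          exact ENNReal.rpow_le_rpow (hAmono hj.2) hp.le
      _ ≤ T M := ENNReal.sum_le_tsum _
  have hg : ∀ N : ℕ, (N : ℝ≥0∞) * A N ^ p ≤ 2 * T (N / 2) := by
    intro N
    have h1 := hchunk (N / 2) N (Nat.div_le_self N 2)
    have hnat : N ≤ 2 * (N + 1 - N / 2) := by omega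
    calc (N : ℝ≥0∞) * A N ^ p
        ≤ ((2 * (N + 1 - N / 2) : ℕ) : ℝ≥0∞) * A N ^ p := by
          exact mul_le_mul_left (by exact_mod_cast Nat.cast_le.2 hnat) _
      _ = 2 * (((N + 1 - N / 2 : ℕ) : ℝ≥0∞) * A N ^ p) := by push_cast; ring
      _ ≤ 2 * T (N / 2) := mul_le_mul_right h1 2
  have hgt : Tendsto (fun N : ℕ => (N : ℝ≥0∞) * A N ^ p) atTop (nhds 0) := by
    have hdiv : Tendsto (fun N : ℕ => N / 2) atTop atTop :=
      tendsto_atTop_atTop.2 fun b => ⟨2 * b, fun n hn => by omega⟩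
    have h2 : Tendsto (fun N : ℕ => 2 * T (N / 2)) atTop (nhds 0) := by
      have := ENNReal.Tendsto.const_mul (a := 2) (hTtend.comp hdiv)
        (Or.inr ENNReal.ofNat_ne_top)
      simpa using this
    exact tendsto_of_tendsto_of_tendsto_of_le_of_le tendsto_const_nhds h2
      (fun N => zero_le) hg
  -- `N ^ (1/p) * a_N → 0`
  have h1 : Tendsto (fun N : ℕ => (N : ℝ≥0∞) ^ (1 / p) * A N) atTop (nhds 0) := by
    have heq : ∀ N : ℕ, (N : ℝ≥0∞) ^ (1 / p) * A N = ((N : ℝ≥0∞) * A N ^ p) ^ (1 / p) := by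
      intro N
      rw [ENNReal.mul_rpow_of_nonneg _ _ (by positivity)]
      congr 1
      rw [← ENNReal.rpow_mul, mul_one_div, div_self hp.ne', ENNReal.rpow_one]
    simp only [heq]
    have hc : Continuous fun x : ℝ≥0∞ => x ^ (1 / p) := ENNReal.continuous_rpow_const
    have := (hc.tendsto 0).comp hgt
    simpa [Function.comp_def, ENNReal.zero_rpow_of_pos (by positivity : (0 : ℝ) < p⁻¹)] using this
  rcases eq_or_ne q ⊤ with hq | hq
  · -- case `q = ∞`
    subst hq
    have hbd : ∀ N, tailNorm a ⊤ N ≤ A N := by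
      intro N
      have hC : ∀ j : ℕ, ‖if N ≤ j then a j else 0‖ ≤ a N := by
        intro j
        by_cases h : N ≤ j
        · rw [if_pos h, Real.norm_of_nonneg (hapos j).le]
          exact hmono h
        · rw [if_neg h, norm_zero]
          exact (hapos N).le
      have := eLpNorm_le_of_ae_bound (μ := Measure.count) (p := ⊤)
        (f := fun j : ℕ => if N ≤ j then a j else 0)
        (Eventually.of_forall hC)
      simpa [tailNorm, hA] using this
    have hub : ∀ N : ℕ, (N : ℝ≥0∞) ^ (1 / p - (1 / (⊤ : ℝ≥0∞)).toReal) * tailNorm a ⊤ N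
        ≤ (N : ℝ≥0∞) ^ (1 / p) * A N := by
      intro N
      have : (1 / p - (1 / (⊤ : ℝ≥0∞)).toReal) = 1 / p := by simp
      rw [this]
      exact mul_le_mul_right (hbd N) _
    exact tendsto_of_tendsto_of_tendsto_of_le_of_le tendsto_const_nhds h1
      (fun N => zero_le) hub
  · -- case `q < ∞`
    have hq0 : q ≠ 0 := (zero_le.trans_lt hpq).ne'
    set qr := q.toReal with hqr
    have hqrp : p < qr := by
      rw [hqr]
      exact (ENNReal.ofReal_lt_iff_lt_toReal hp.le hq).1 hpq
    have hqr0 : 0 < qr := hp.trans hqrp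
    have hexp : (1 / q).toReal = 1 / qr := by
      rw [one_div, one_div, ENNReal.toReal_inv, hqr]
    have htail : ∀ N, tailNorm a q N
        = (∑' j, if N ≤ j then A j ^ qr else 0) ^ (1 / qr) := by
      intro N
      rw [tailNorm, eLpNorm_eq_lintegral_rpow_enorm_toReal hq0 hq, lintegral_count]
      congr 1
      apply tsum_congr; intro j
      by_cases h : N ≤ j
      · rw [if_pos h, if_pos h, Real.enorm_eq_ofReal (hapos j).le, hA]
      · rw [if_neg h, if_neg h]
        simp [ENNReal.zero_rpow_of_pos hqr0, ← hqr, hqr0]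
    have hS : ∀ N, (∑' j, if N ≤ j then A j ^ qr else 0) ≤ A N ^ (qr - p) * T N := by
      intro N
      rw [hT, ← ENNReal.tsum_mul_left]
      apply ENNReal.tsum_le_tsum
      intro j
      by_cases h : N ≤ j
      · rw [if_pos h, if_pos h]
        calc A j ^ qr = A j ^ (qr - p) * A j ^ p := by
              rw [← ENNReal.rpow_add _ _ (hAne j) (hAnt j), sub_add_cancel]
          _ ≤ A N ^ (qr - p) * A j ^ p :=
              mul_le_mul_left (ENNReal.rpow_le_rpow (hAmono h) (by linarith)) _
      · simp [h]
    set c : ℝ := 1 - p / qr with hc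
    have hcpos : 0 < c := by
      rw [hc]
      have : p / qr < 1 := (div_lt_one hqr0).2 hqrp
      linarith
    have e1 : 1 / p - 1 / qr = 1 / p * c := by
      rw [hc]
      field_simp
    have e2 : (qr - p) * (1 / qr) = c := by
      rw [hc]
      field_simp
    have hbound : ∀ N : ℕ, (N : ℝ≥0∞) ^ (1 / p - (1 / q).toReal) * tailNorm a q N
        ≤ ((N : ℝ≥0∞) ^ (1 / p) * A N) ^ c * T N ^ (1 / qr) := by
      intro N
      rw [htail N, hexp]
      calc (N : ℝ≥0∞) ^ (1 / p - 1 / qr) * (∑' j, if N ≤ j then A j ^ qr else 0) ^ (1 / qr)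
          ≤ (N : ℝ≥0∞) ^ (1 / p - 1 / qr) * (A N ^ (qr - p) * T N) ^ (1 / qr) :=
            mul_le_mul_right (ENNReal.rpow_le_rpow (hS N) (by positivity)) _
        _ = ((N : ℝ≥0∞) ^ (1 / p)) ^ c * (A N ^ c * T N ^ (1 / qr)) := by
            rw [e1, ENNReal.rpow_mul, ENNReal.mul_rpow_of_nonneg _ _ (by positivity),
              ← ENNReal.rpow_mul (A N), e2]
        _ = ((N : ℝ≥0∞) ^ (1 / p) * A N) ^ c * T N ^ (1 / qr) := by
            rw [ENNReal.mul_rpow_of_nonneg _ _ hcpos.le]; ring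
    have hrhs : Tendsto (fun N : ℕ => ((N : ℝ≥0∞) ^ (1 / p) * A N) ^ c * T N ^ (1 / qr))
        atTop (nhds 0) := by
      have t1 : Tendsto (fun N : ℕ => ((N : ℝ≥0∞) ^ (1 / p) * A N) ^ c) atTop (nhds 0) := by
        have hc' : Continuous fun x : ℝ≥0∞ => x ^ c := ENNReal.continuous_rpow_const
        have := (hc'.tendsto 0).comp h1
        simpa [Function.comp_def, ENNReal.zero_rpow_of_pos hcpos] using this
      have t2 : Tendsto (fun N : ℕ => T N ^ (1 / qr)) atTop (nhds 0) := by
        have hc' : Continuous fun x : ℝ≥0∞ => x ^ (1 / qr) := ENNReal.continuous_rpow_const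
        have := (hc'.tendsto 0).comp hTtend
        simpa [Function.comp_def, ENNReal.zero_rpow_of_pos (by positivity : (0 : ℝ) < qr⁻¹)] using this
      have := ENNReal.Tendsto.mul t1 (Or.inr ENNReal.zero_ne_top) t2 (Or.inr ENNReal.zero_ne_top)
      simpa using this
    exact tendsto_of_tendsto_of_tendsto_of_le_of_le tendsto_const_nhds hrhs
      (fun N => zero_le) hbound
end
end
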